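/- Let p/q be an even rational parameter with p ≥ 2, with even predecessor p'/q' and with κ = κ(p/q). Then 2κp' < p and 2κq' < q; moreover, setting p̂ = p − 2κp' and q̂ = q − 2κq', the integers p̂ and q̂ are coprime, p̂q̂ is even, and 0 < p̂ < q̂ (so the core predecessor p̂/q̂ is again an even rational parameter). -/

import Mathlib

/-- An *even rational parameter* is a fraction `p/q` with `p, q` coprime positive
integers, `p < q`, and `p*q` even. -/
def EvenParam (p q : ℕ) : Prop :=
  Nat.Coprime p q ∧ 0 < p ∧ p < q ∧ Even (p * q)

/-- `τ` is the *tune* of `p/q`: `0 < 2τ < p+q` and `2pτ ≡ ±1 (mod p+q)`. -/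
def IsTune (p q τ : ℕ) : Prop :=
  0 < 2 * τ ∧ 2 * τ < p + q ∧
    (((p : ℤ) + q) ∣ 2 * p * τ - 1 ∨ ((p : ℤ) + q) ∣ 2 * p * τ + 1)

/-- `p'/q'` is the *even predecessor* of `p/q`. -/
def IsEvenPred (p q p' q' : ℕ) : Prop :=
  Nat.Coprime p' q' ∧ p' < q' ∧ Even (p' * q') ∧
    ((p : ℤ) * q' - (q : ℤ) * p').natAbs = 1 ∧ p' + q' < p + q

/-- `κ` is the unique nonnegative integer with `κ/(2κ+1) ≤ τ/(p+q) < (κ+1)/(2κ+3)`. -/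
def IsKappa (p q τ κ : ℕ) : Prop :=
  κ * (p + q) ≤ (2 * κ + 1) * τ ∧ (2 * κ + 3) * τ < (κ + 1) * (p + q)

set_option maxHeartbeats 2000000 in
/-- the core predecessor is again an even rational parameter. -/
theorem corePred_evenParam (p q τ κ p' q' : ℕ) (h : EvenParam p q) (hp2 : 2 ≤ p)
    (hτ : IsTune p q τ) (hκ : IsKappa p q τ κ)
    (hpred : IsEvenPred p q p' q') :
    2 * κ * p' < p ∧ 2 * κ * q' < q ∧
      Nat.Coprime (p - 2 * κ * p') (q - 2 * κ * q') ∧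
      Even ((p - 2 * κ * p') * (q - 2 * κ * q')) ∧
      0 < p - 2 * κ * p' ∧ p - 2 * κ * p' < q - 2 * κ * q' := by
  obtain ⟨hcop, hp0, hpq, hev⟩ := h
  obtain ⟨hcop', hpq', hev', hdet, hsum'⟩ := hpred
  -- parity of p + q : odd
  have hodd : (p + q) % 2 = 1 := by
    have h1 : 2 ∣ p ∨ 2 ∣ q := by
      rcases Nat.even_mul.mp hev with h | h
      · exact Or.inl h.two_dvd
      · exact Or.inr h.two_dvd
    have h2 : ¬ (2 ∣ p ∧ 2 ∣ q) := by
      rintro ⟨ha, hb⟩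
      have := Nat.dvd_gcd ha hb
      rw [hcop] at this
      omega
    omega
  -- parity of p' + q' : odd
  have hodd' : (p' + q') % 2 = 1 := by
    have h1 : 2 ∣ p' ∨ 2 ∣ q' := by
      rcases Nat.even_mul.mp hev' with h | h
      · exact Or.inl h.two_dvd
      · exact Or.inr h.two_dvd
    have h2 : ¬ (2 ∣ p' ∧ 2 ∣ q') := by
      rintro ⟨ha, hb⟩
      have := Nat.dvd_gcd ha hb
      rw [hcop'] at this
      omega
    omega
  -- p' ≥ 1 (else p' = 0, q' = 1 forces p = 1)
  have hp'1 : 1 ≤ p' := by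
    by_contra hc
    have hp'0 : p' = 0 := by omega
    have hq'1 : q' = 1 := by
      have := hcop'
      rw [hp'0] at this
      simpa [Nat.Coprime] using this
    rw [hp'0, hq'1] at hdet
    simp at hdet
    omega
  have hq'2 : 2 ≤ q' := by omega
  -- determinant ε = ±1
  set e : ℤ := (p : ℤ) * q' - (q : ℤ) * p' with he_def
  have he : e = 1 ∨ e = -1 := by
    have := Int.natAbs_eq_iff.mp hdet
    simpa using this
  -- p * (p'+q') ≡ e (mod p+q)
  have hkey : ((p : ℤ) + q) ∣ (p : ℤ) * (p' + q') - e := by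
    refine ⟨(p' : ℤ), by rw [he_def]; ring⟩
  -- from tune: (p+q) ∣ 2τ - (p'+q') or (p+q) ∣ 2τ + (p'+q')
  have hcopPω : IsCoprime ((p : ℤ) + q) (p : ℤ) := by
    have : Nat.Coprime (p + q) p := by
      simpa [Nat.Coprime, Nat.gcd_comm] using (Nat.coprime_add_self_right.mpr hcop)
    have := Nat.isCoprime_iff_coprime.mpr this
    exact_mod_cast this
  have hdvd : ((p : ℤ) + q) ∣ ((p : ℤ) * (2 * τ - (p' + q'))) ∨
      ((p : ℤ) + q) ∣ ((p : ℤ) * (2 * τ + (p' + q'))) := by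
    rcases hτ.2.2 with h1 | h1
    · rcases he with he1 | he1
      · left
        have := dvd_sub h1 hkey
        rw [he1] at this
        convert this using 1; rfl; ring
      · right
        have := dvd_add h1 hkey
        rw [he1] at this
        convert this using 1; rfl; ring
    · rcases he with he1 | he1
      · right
        have := dvd_add h1 hkey
        rw [he1] at this
        convert this using 1; rfl; ring
      · left
        have := dvd_sub h1 hkey
        rw [he1] at this
        convert this using 1; rfl; ring
  have hdvd2 : ((p : ℤ) + q) ∣ (2 * τ - (p' + q')) ∨
      ((p : ℤ) + q) ∣ (2 * τ + (p' + q')) := by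
    rcases hdvd with h1 | h1
    · exact Or.inl (hcopPω.dvd_of_dvd_mul_left h1)
    · exact Or.inr (hcopPω.dvd_of_dvd_mul_left h1)
  -- conclude 2τ + (p'+q') = p + q
  have hτω : 2 * τ + (p' + q') = p + q := by
    have hτ1 := hτ.1
    have hτ2 := hτ.2.1
    rcases hdvd2 with h1 | h1
    · -- impossible by parity: would give 2τ = p'+q'
      exfalso
      obtain ⟨k, hk⟩ := h1
      have hb1 : -((p : ℤ) + q) < 2 * τ - (p' + q') := by
        push_cast; omega
      have hb2 : 2 * (τ : ℤ) - (p' + q') < (p : ℤ) + q := by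
        push_cast; omega
      have hω0 : (0 : ℤ) < (p : ℤ) + q := by push_cast; omega
      have hk0 : k = 0 := by
        by_contra hk0
        rcases lt_or_gt_of_ne hk0 with hk1 | hk1
        · nlinarith
        · nlinarith
      rw [hk0, mul_zero] at hk
      have : 2 * τ = p' + q' := by push_cast at hk; omega
      omega
    · obtain ⟨k, hk⟩ := h1
      have hb1 : (0 : ℤ) < 2 * τ + (p' + q') := by push_cast; omega
      have hb2 : 2 * (τ : ℤ) + (p' + q') < 2 * ((p : ℤ) + q) := by
        push_cast; omega
      have hω0 : (0 : ℤ) < (p : ℤ) + q := by push_cast; omega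
      have hk1 : k = 1 := by
        by_contra hk0
        rcases lt_or_gt_of_ne hk0 with hk1 | hk1
        · have : k ≤ 0 := by omega
          nlinarith
        · have : 2 ≤ k := by omega
          nlinarith
      rw [hk1, mul_one] at hk
      push_cast at hk; omega
  -- key inequality: (2κ+1)(p'+q') ≤ p + q
  have hmain : (2 * κ + 1) * (p' + q') ≤ p + q := by
    have h1 : (κ : ℤ) * (p + q) ≤ (2 * κ + 1) * τ := by exact_mod_cast hκ.1
    have h2 : 2 * (τ : ℤ) + (p' + q') = p + q := by exact_mod_cast hτω
    have hint : (2 * (κ : ℤ) + 1) * (2 * τ) =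
        (2 * κ + 1) * ((p + q) - (p' + q')) := by linear_combination (2 * (κ:ℤ) + 1) * h2
    have : ((2 * κ + 1 : ℕ) : ℤ) * ((p' : ℤ) + q') ≤ (p : ℤ) + q := by
      push_cast
      linarith [h1, hint]
    exact_mod_cast this
  -- now work in ℤ with A = p - 2κp', B = q - 2κq'
  set A : ℤ := (p : ℤ) - 2 * κ * p' with hA_def
  set B : ℤ := (q : ℤ) - 2 * κ * q' with hB_def
  have hABsum : (p' : ℤ) + q' ≤ A + B := by
    have : ((2 * κ + 1) : ℤ) * (p' + q') ≤ (p : ℤ) + q := by exact_mod_cast hmain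
    rw [hA_def, hB_def]; push_cast at this ⊢; linarith
  have hAB3 : (3 : ℤ) ≤ A + B := by
    have : (3 : ℤ) ≤ (p' : ℤ) + q' := by push_cast; omega
    linarith
  have hABdet : A * q' - B * p' = e := by
    rw [hA_def, hB_def, he_def]; ring
  have hqA : (q : ℤ) * A - (p : ℤ) * B = 2 * κ * e := by
    rw [hA_def, hB_def, he_def]; ring
  have hKq : 2 * (κ : ℤ) < q := by
    have : ((2 * κ + 1) : ℤ) * (p' + q') ≤ (p : ℤ) + q := by exact_mod_cast hmain
    have h3 : (3 : ℤ) ≤ (p' : ℤ) + q' := by push_cast; omega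
    have hpq' : (p : ℤ) < q := by exact_mod_cast hpq
    have h4 : 2 * (κ : ℤ) * 3 ≤ 2 * κ * ((p' : ℤ) + q') :=
      mul_le_mul_of_nonneg_left h3 (by positivity)
    push_cast at this
    linarith
  have he1 : e ≤ 1 ∧ -1 ≤ e := by rcases he with h | h <;> simp [h]
  have hκ0 : (0 : ℤ) ≤ (κ : ℤ) := Int.natCast_nonneg κ
  have hP'1 : (1 : ℤ) ≤ (p' : ℤ) := by exact_mod_cast hp'1
  have hQ'2 : (2 : ℤ) ≤ (q' : ℤ) := by exact_mod_cast hq'2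
  have hQ'P' : (p' : ℤ) + 1 ≤ q' := by exact_mod_cast hpq'
  have hP2 : (2 : ℤ) ≤ (p : ℤ) := by exact_mod_cast hp2
  have hPQ : (p : ℤ) < q := by exact_mod_cast hpq
  -- B ≥ 1
  have hB1 : 1 ≤ B := by
    by_contra hc
    push_neg at hc
    have hBle : B ≤ 0 := by omega
    have hA3 : 3 ≤ A := by linarith
    have f1 : (q : ℤ) * 3 ≤ q * A := by
      apply mul_le_mul_of_nonneg_left hA3 (by linarith)
    have f2 : (p : ℤ) * B ≤ 0 :=
      mul_nonpos_of_nonneg_of_nonpos (by linarith) hBle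
    have f3 : 2 * (κ : ℤ) * e ≤ 2 * κ * 1 := by
      apply mul_le_mul_of_nonneg_left he1.1 (by linarith)
    linarith [hqA, hKq]
  -- A ≥ 1
  have hA1 : 1 ≤ A := by
    by_contra hc
    push_neg at hc
    have hAle : A ≤ 0 := by omega
    have hB3 : 3 ≤ B := by linarith
    -- e = A*q' - B*p' ≤ 0 - 3 = -3, contradiction
    have h1 : A * q' ≤ 0 := mul_nonpos_of_nonpos_of_nonneg hAle (by linarith)
    have h2 : (3 : ℤ) ≤ B * p' := by nlinarith
    linarith [hABdet, he1.2]
  -- A < B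
  have hAltB : A < B := by
    by_contra hc
    push_neg at hc
    have hA2 : 2 ≤ A := by linarith
    have h1 : 2 ≤ A * (q' - p') := by nlinarith
    have h2 : 0 ≤ p' * (A - B) := mul_nonneg (by linarith) (by linarith)
    -- e = A*(q'-p') + p'*(A-B) ≥ 2
    have : 2 ≤ e := by nlinarith [hABdet]
    omega
  -- transfer to ℕ
  have g1 : 2 * κ * p' < p := by
    have : 2 * (κ : ℤ) * p' < p := by rw [hA_def] at hA1; linarith
    exact_mod_cast this
  have g2 : 2 * κ * q' < q := by
    have : 2 * (κ : ℤ) * q' < q := by rw [hB_def] at hB1; linarith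
    exact_mod_cast this
  have gA : ((p - 2 * κ * p' : ℕ) : ℤ) = A := by
    rw [hA_def]; push_cast [Nat.cast_sub (le_of_lt g1)]; ring
  have gB : ((q - 2 * κ * q' : ℕ) : ℤ) = B := by
    rw [hB_def]; push_cast [Nat.cast_sub (le_of_lt g2)]; ring
  refine ⟨g1, g2, ?_, ?_, by omega, ?_⟩
  · -- coprimality
    rw [← Nat.isCoprime_iff_coprime, gA, gB]
    refine ⟨e * (q' : ℤ), -(e * (p' : ℤ)), ?_⟩
    rcases he with h1 | h1 <;> rw [h1] at hABdet ⊢ <;> linarith [hABdet]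
  · -- evenness: A + B is odd
    have e1 : 2 * κ * p' = 2 * (κ * p') := by ring
    have e2 : 2 * κ * q' = 2 * (κ * q') := by ring
    have hABodd : ((p - 2 * κ * p') + (q - 2 * κ * q')) % 2 = 1 := by omega
    rcases Nat.even_or_odd (p - 2 * κ * p') with h1 | h1
    · exact Nat.even_mul.mpr (Or.inl h1)
    · refine Nat.even_mul.mpr (Or.inr ?_)
      rw [Nat.even_iff]
      rw [Nat.odd_iff] at h1
      omega
  · -- p̂ < q̂
    have : ((p - 2 * κ * p' : ℕ) : ℤ) < ((q - 2 * κ * q' : ℕ) : ℤ) := by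
      rw [gA, gB]; exact hAltB
    exact_mod_cast this
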